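/- arXiv:2308.09625 — 2 statements merged into one kernel-verified Lean document; each statement's English description precedes it below -/
import Mathlib

section
/- Let n be an odd natural number, let a₁, …, aₙ ∈ ℕ and let T ∈ ℕ with T ≤ Σ_{i=1}^n aᵢ. Let Ψ be the statement ∃x₁ ∈ {0,1} ∀x₂ ∈ {0,1} ∃x₃ ∈ {0,1} … ∃xₙ ∈ {0,1} : Σ_{i=1}^n xᵢ·aᵢ = T (the quantifier on x_k is existential for odd k and universal for even k). Consider the 2-weighted reachability game whose vertices are x₁, …, xₙ, x₁⁰, x₁¹, …, xₙ⁰, xₙ¹ and y, where x_k belongs to Player 1 for odd k and to Player 2 for even k, and all other vertices belong to Player 1; whose edges are (x_k, x_k¹) of weight (a_k, 0) and (x_k, x_k⁰) of weight (0, a_k) for 1 ≤ k ≤ n, (x_k¹, x_{k+1}) and (x_k⁰, x_{k+1}) of weight (0,0) for 1 ≤ k ≤ n−1, and (xₙ¹, y), (xₙ⁰, y) and the self-loop (y, y), all of weight (0,0); and whose target set is {y}. Then Ψ is true if and only if there exists a strategy σ₁ of Player 1 from x₁ such that Cost(Out(σ₁,σ₂,x₁)) ≤_C (T, Σ_{i=1}^n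 aᵢ − T) for every strategy σ₂ of Player 2. -/
open Classical

/-- Cost profiles: `d`-tuples over `ℕ ∪ {∞}`. -/
abbrev CostP (d : ℕ) := Fin d → ℕ∞

/-- The componentwise order `≤_C` on `(ℕ ∪ {∞})^d`. -/
def leC {d : ℕ} (x y : CostP d) : Prop := x ≤ y

/-- The strict lexicographic order `<_L` on `(ℕ ∪ {∞})^d`. -/
def ltL {d : ℕ} (x y : CostP d) : Prop :=
  ∃ i, (∀ j, j < i → x j = y j) ∧ x i < y i

/-- The lexicographic order `≤_L` on `(ℕ ∪ {∞})^d`. -/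
def leL {d : ℕ} (x y : CostP d) : Prop := x = y ∨ ltL x y

/-- Minimal elements of `X` with respect to an order `le`. -/
def minimalSet {α : Type*} (le : α → α → Prop) (X : Set α) : Set α :=
  { x | x ∈ X ∧ ∀ y ∈ X, le y x → y = x }

/-- Upward closure of `X` with respect to an order `le`. -/
def upSet {α : Type*} (le : α → α → Prop) (X : Set α) : Set α :=
  { z | ∃ x ∈ X, le x z }

/-- Translation of a set of cost profiles by (the cast of) a tuple `c ∈ ℕ^d`. -/
def addW {d : ℕ} (X : Set (CostP d)) (c : Fin d → ℕ) : Set (CostP d) :=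
  { z | ∃ x ∈ X, z = x + fun i => (c i : ℕ∞) }

/-- A `d`-weighted reachability game: a finite directed graph whose vertices are
partitioned into Player 1's vertices `V1` and Player 2's vertices (the complement),
an edge relation `E` such that every vertex has a successor, a `d`-dimensional
weight function `w` on edges, and a target set `F`. -/
structure MWGame (V : Type*) (d : ℕ) where
  V1 : Set V
  E : V → V → Prop
  succ_nonempty : ∀ v, ∃ v', E v v'
  w : V → V → Fin d → ℕ
  F : Set V

namespace MWGame

variable {V : Type*} {d : ℕ}

/-- Strategies of Player 1: a choice of successor for every history
(represented as the pair (strict past, current vertex)), valid at Player 1's vertices. -/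
def Strat1 (G : MWGame V d) :=
  { σ : List V → V → V // ∀ h u, u ∈ G.V1 → G.E u (σ h u) }

/-- Strategies of Player 2. -/
def Strat2 (G : MWGame V d) :=
  { σ : List V → V → V // ∀ h u, u ∉ G.V1 → G.E u (σ h u) }

/-- The pair (strict past, current vertex) after `n` steps of the play consistent
with `σ₁` and `σ₂` from `v`. -/
noncomputable def outAux (G : MWGame V d) (σ₁ : G.Strat1) (σ₂ : G.Strat2) (v : V) :
    ℕ → List V × V
  | 0 => ([], v)
  | n + 1 =>
    let q := G.outAux σ₁ σ₂ v n
    (q.1 ++ [q.2], if q.2 ∈ G.V1 then σ₁.1 q.1 q.2 else σ₂.1 q.1 q.2)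

/-- `Out(σ₁,σ₂,v)`: the unique play from `v` consistent with `σ₁` and `σ₂`. -/
noncomputable def out (G : MWGame V d) (σ₁ : G.Strat1) (σ₂ : G.Strat2) (v : V) (n : ℕ) : V :=
  (G.outAux σ₁ σ₂ v n).2

/-- The cost profile of a play: the componentwise sum of weights up to the first
visit of the target set, and `(∞,…,∞)` if the target set is never visited. -/
noncomputable def cost (G : MWGame V d) (ρ : ℕ → V) : CostP d :=
  if h : ∃ ℓ, ρ ℓ ∈ G.F then
    fun i => ∑ n ∈ Finset.range (Nat.find h), (G.w (ρ n) (ρ (n + 1)) i : ℕ∞)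
  else ⊤

/-- `Ensure^k(v)`: cost profiles that Player 1 can ensure from `v` within `k` steps. -/
def EnsureK (G : MWGame V d) (le : CostP d → CostP d → Prop) (k : ℕ) (v : V) :
    Set (CostP d) :=
  { x | ∃ σ₁ : G.Strat1, ∀ σ₂ : G.Strat2,
      le (G.cost (G.out σ₁ σ₂ v)) x ∧
      ∀ h : (∃ ℓ, G.out σ₁ σ₂ v ℓ ∈ G.F), Nat.find h ≤ k }

/-- `Ensure(v)`: cost profiles that Player 1 can ensure from `v`. -/
def Ensure (G : MWGame V d) (le : CostP d → CostP d → Prop) (v : V) : Set (CostP d) :=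
  { x | ∃ σ₁ : G.Strat1, ∀ σ₂ : G.Strat2, le (G.cost (G.out σ₁ σ₂ v)) x }

/-- The sets `Iᵏ(v)` computed by the fixpoint algorithm, relative to the order `le`. -/
noncomputable def Iset (G : MWGame V d) (le : CostP d → CostP d → Prop) :
    ℕ → V → Set (CostP d)
  | 0, v => if v ∈ G.F then {0} else {⊤}
  | k + 1, v =>
    if v ∈ G.F then {0}
    else if v ∈ G.V1 then
      minimalSet le (⋃ v' ∈ { u | G.E v u }, addW (upSet le (G.Iset le k v')) (G.w v v'))
    else
      minimalSet le (⋂ v' ∈ { u | G.E v u }, addW (upSet le (G.Iset le k v')) (G.w v v'))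

end MWGame
/-- Vertices of the game used in the reduction from Quantified Subset-Sum:
`var k` is the vertex `x_{k+1}`, `val k b` is the vertex `x_{k+1}^b`, and
`tgt` is the target vertex `y` (indices are 0-based). -/
inductive QV (n : ℕ) where
  | var : Fin n → QV n
  | val : Fin n → Bool → QV n
  | tgt : QV n

/-- The 2-weighted reachability game of the reduction: `var k` belongs to Player 1
iff `k` is even (i.e. the 1-based variable `x_{k+1}` is existentially quantified),
edges `var k → val k b` carry weight `(aₖ, 0)` for `b = 1` and `(0, aₖ)` for `b = 0`,
all other edges carry weight `(0,0)`, and the target set is `{y}`. -/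
def qGame (n : ℕ) (a : ℕ → ℕ) : MWGame (QV n) 2 where
  V1 := { u | match u with
              | .var k => (k : ℕ) % 2 = 0
              | _ => True }
  E := fun u z => match u, z with
    | .var k, .val k' _ => k' = k
    | .val k _, .var k' => (k' : ℕ) = (k : ℕ) + 1
    | .val k _, .tgt => (k : ℕ) + 1 = n
    | .tgt, .tgt => True
    | _, _ => False
  succ_nonempty := by
    intro u
    match u with
    | .var k => exact ⟨.val k true, rfl⟩
    | .val k b =>
      by_cases h : (k : ℕ) + 1 = n
      · exact ⟨.tgt, h⟩
      · exact ⟨.var ⟨(k : ℕ) + 1, lt_of_le_of_ne k.isLt h⟩, rfl⟩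
    | .tgt => exact ⟨.tgt, trivial⟩
  w := fun u z i => match u, z with
    | .var k, .val k' b =>
      if k' = k then
        (if b then (if (i : ℕ) = 0 then a k else 0) else (if (i : ℕ) = 0 then 0 else a k))
      else 0
    | _, _ => 0
  F := { u | u = .tgt }

/-- `qss a T n m s` expresses the alternating quantified statement
`Q x_{n-m+1} ∈ {0,1} … ∃ xₙ ∈ {0,1}, s + Σ xᵢ aᵢ = T` over the last `m` variables,
where the quantifier on the (1-based) variable `x_{k+1}` is existential iff `k` is even.
The formula `Ψ` of the Quantified Subset-Sum problem is `qss a T n n 0`. -/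
def qss (a : ℕ → ℕ) (T n : ℕ) : ℕ → ℕ → Prop
  | 0, s => s = T
  | m + 1, s =>
    if (n - (m + 1)) % 2 = 0 then
      ∃ b : Bool, qss a T n m (s + if b then a (n - (m + 1)) else 0)
    else
      ∀ b : Bool, qss a T n m (s + if b then a (n - (m + 1)) else 0)

section Reduction
open MWGame

variable {n : ℕ} {a : ℕ → ℕ}

/-- Decode the boolean from a `val` vertex. -/
def decodeB {n : ℕ} : QV n → Bool
  | .val _ b => b
  | _ => false

/-- The canonical history list after `2k` steps, given the choice sequence `c`. -/
def hlist (n : ℕ) (c : ℕ → Bool) : ℕ → List (QV n)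
  | 0 => []
  | k+1 => hlist n c k ++ (if h : k < n then [QV.var ⟨k,h⟩, QV.val ⟨k,h⟩ (c k)] else [])

/-- Accumulated first-component sum of the first `k` choices. -/
def Ssum (a : ℕ → ℕ) (c : ℕ → Bool) (k : ℕ) : ℕ :=
  ∑ i ∈ Finset.range k, if c i then a i else 0

def Ssum' (a : ℕ → ℕ) (c : ℕ → Bool) (k : ℕ) : ℕ :=
  ∑ i ∈ Finset.range k, if c i then 0 else a i

lemma mem_V1_var {k : Fin n} : QV.var k ∈ (qGame n a).V1 ↔ (k : ℕ) % 2 = 0 := Iff.rfl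

lemma mem_V1_val {k : Fin n} {b : Bool} : QV.val k b ∈ (qGame n a).V1 := trivial

lemma mem_V1_tgt : (QV.tgt : QV n) ∈ (qGame n a).V1 := trivial

lemma E_var {k : Fin n} {z : QV n} (h : (qGame n a).E (.var k) z) : ∃ b, z = .val k b := by
  cases z with
  | val k' b => exact ⟨b, by have : k' = k := h; rw [this]⟩
  | var k' => exact h.elim
  | tgt => exact h.elim

lemma E_val_lt {k : Fin n} {b : Bool} {z : QV n} (hk : (k : ℕ) + 1 < n)
    (h : (qGame n a).E (.val k b) z) : z = .var ⟨(k : ℕ) + 1, hk⟩ := by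
  cases z with
  | var k' => have : (k' : ℕ) = (k : ℕ) + 1 := h; exact congrArg QV.var (Fin.ext this)
  | val k' b' => exact h.elim
  | tgt => exact absurd (h : (k : ℕ) + 1 = n) (Nat.ne_of_lt hk)

lemma E_val_eq {k : Fin n} {b : Bool} {z : QV n} (hk : (k : ℕ) + 1 = n)
    (h : (qGame n a).E (.val k b) z) : z = .tgt := by
  cases z with
  | var k' =>
    have : (k' : ℕ) = (k : ℕ) + 1 := h
    exact absurd (this ▸ k'.isLt) (by omega)
  | val k' b' => exact h.elim
  | tgt => rfl

lemma E_tgt {z : QV n} (h : (qGame n a).E .tgt z) : z = .tgt := by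
  cases z with
  | var k' => exact h.elim
  | val k' b' => exact h.elim
  | tgt => rfl

end Reduction
section Play
open MWGame

variable {n : ℕ} {a : ℕ → ℕ}

lemma outAux_succ_eq (σ₁ : (qGame n a).Strat1) (σ₂ : (qGame n a).Strat2) (v : QV n) (m : ℕ) :
    (qGame n a).outAux σ₁ σ₂ v (m+1) =
      (((qGame n a).outAux σ₁ σ₂ v m).1 ++ [((qGame n a).outAux σ₁ σ₂ v m).2],
       if ((qGame n a).outAux σ₁ σ₂ v m).2 ∈ (qGame n a).V1
       then σ₁.1 ((qGame n a).outAux σ₁ σ₂ v m).1 ((qGame n a).outAux σ₁ σ₂ v m).2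
       else σ₂.1 ((qGame n a).outAux σ₁ σ₂ v m).1 ((qGame n a).outAux σ₁ σ₂ v m).2) := rfl

lemma step_var (σ₁ : (qGame n a).Strat1) (σ₂ : (qGame n a).Strat2) (v : QV n)
    {L : List (QV n)} {k : Fin n} {m : ℕ}
    (h : (qGame n a).outAux σ₁ σ₂ v m = (L, .var k)) :
    ∃ b, (qGame n a).outAux σ₁ σ₂ v (m+1) = (L ++ [.var k], .val k b) := by
  rw [outAux_succ_eq, h]
  by_cases hp : (k : ℕ) % 2 = 0
  · rw [if_pos (mem_V1_var.mpr hp)]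
    obtain ⟨b, hb⟩ := E_var (σ₁.2 L (.var k) (mem_V1_var.mpr hp))
    exact ⟨b, by rw [hb]⟩
  · rw [if_neg (fun hm => hp (mem_V1_var.mp hm))]
    obtain ⟨b, hb⟩ := E_var (σ₂.2 L (.var k) (fun hm => hp (mem_V1_var.mp hm)))
    exact ⟨b, by rw [hb]⟩

lemma step_val_lt (σ₁ : (qGame n a).Strat1) (σ₂ : (qGame n a).Strat2) (v : QV n)
    {L : List (QV n)} {k : Fin n} {b : Bool} {m : ℕ} (hk : (k : ℕ) + 1 < n)
    (h : (qGame n a).outAux σ₁ σ₂ v m = (L, .val k b)) :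
    (qGame n a).outAux σ₁ σ₂ v (m+1) = (L ++ [.val k b], .var ⟨(k:ℕ)+1, hk⟩) := by
  rw [outAux_succ_eq, h, if_pos mem_V1_val]
  rw [E_val_lt hk (σ₁.2 L (.val k b) mem_V1_val)]

lemma step_val_eq (σ₁ : (qGame n a).Strat1) (σ₂ : (qGame n a).Strat2) (v : QV n)
    {L : List (QV n)} {k : Fin n} {b : Bool} {m : ℕ} (hk : (k : ℕ) + 1 = n)
    (h : (qGame n a).outAux σ₁ σ₂ v m = (L, .val k b)) :
    (qGame n a).outAux σ₁ σ₂ v (m+1) = (L ++ [.val k b], .tgt) := by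
  rw [outAux_succ_eq, h, if_pos mem_V1_val]
  rw [E_val_eq hk (σ₁.2 L (.val k b) mem_V1_val)]

lemma step_tgt (σ₁ : (qGame n a).Strat1) (σ₂ : (qGame n a).Strat2) (v : QV n)
    {L : List (QV n)} {m : ℕ}
    (h : (qGame n a).outAux σ₁ σ₂ v m = (L, .tgt)) :
    (qGame n a).outAux σ₁ σ₂ v (m+1) = (L ++ [.tgt], .tgt) := by
  rw [outAux_succ_eq, h, if_pos mem_V1_tgt]
  rw [E_tgt (σ₁.2 L .tgt mem_V1_tgt)]

/-- The sequence of booleans chosen along the play. -/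
noncomputable def bseq (σ₁ : (qGame n a).Strat1) (σ₂ : (qGame n a).Strat2) (hpos : 0 < n)
    (k : ℕ) : Bool :=
  decodeB ((qGame n a).out σ₁ σ₂ (.var ⟨0, hpos⟩) (2*k+1))

lemma outAux_spec (σ₁ : (qGame n a).Strat1) (σ₂ : (qGame n a).Strat2) (hpos : 0 < n)
    (k : ℕ) (hk : k < n) :
    (qGame n a).outAux σ₁ σ₂ (.var ⟨0,hpos⟩) (2*k)
        = (hlist n (bseq σ₁ σ₂ hpos) k, .var ⟨k, hk⟩) ∧
    (qGame n a).outAux σ₁ σ₂ (.var ⟨0,hpos⟩) (2*k+1)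
        = (hlist n (bseq σ₁ σ₂ hpos) k ++ [.var ⟨k, hk⟩], .val ⟨k, hk⟩ (bseq σ₁ σ₂ hpos k)) := by
  induction k with
  | zero =>
    have h0 : (qGame n a).outAux σ₁ σ₂ (.var ⟨0,hpos⟩) 0 = ([], .var ⟨0, hk⟩) := rfl
    refine ⟨h0, ?_⟩
    obtain ⟨b, hb⟩ := step_var σ₁ σ₂ _ h0
    have hbs : bseq σ₁ σ₂ hpos 0 = b := by
      unfold bseq MWGame.out
      rw [show 2*0+1 = 0+1 from rfl, hb]
      rfl
    rw [hbs]
    simpa [hlist] using hb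
  | succ k ih =>
    have hk' : k < n := by omega
    have h1 := (ih hk').2
    by_cases hlt : (k : ℕ) + 1 < n
    · have h2 := step_val_lt σ₁ σ₂ (.var ⟨0,hpos⟩) (k := ⟨k, hk'⟩) hlt h1
      have h2' : (qGame n a).outAux σ₁ σ₂ (.var ⟨0,hpos⟩) (2*(k+1))
          = (hlist n (bseq σ₁ σ₂ hpos) (k+1), .var ⟨k+1, hk⟩) := by
        rw [show 2*(k+1) = (2*k+1)+1 by ring]
        rw [h2]
        congr 1
        · simp [hlist, dif_pos hk']
      refine ⟨h2', ?_⟩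
      obtain ⟨b, hb⟩ := step_var σ₁ σ₂ _ h2'
      have hbs : bseq σ₁ σ₂ hpos (k+1) = b := by
        unfold bseq MWGame.out
        rw [hb]
        rfl
      rw [hbs]
      exact hb
    · omega

lemma outAux_tgt (σ₁ : (qGame n a).Strat1) (σ₂ : (qGame n a).Strat2) (hpos : 0 < n) :
    ((qGame n a).outAux σ₁ σ₂ (.var ⟨0,hpos⟩) (2*n)).2 = .tgt := by
  have hk' : n - 1 < n := by omega
  have h1 := (outAux_spec σ₁ σ₂ hpos (n-1) hk').2
  have h2 := step_val_eq σ₁ σ₂ (.var ⟨0,hpos⟩) (k := ⟨n-1, hk'⟩) (by simp; omega) h1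
  rw [show 2*n = (2*(n-1)+1)+1 by omega, h2]

lemma out_tgt (σ₁ : (qGame n a).Strat1) (σ₂ : (qGame n a).Strat2) (hpos : 0 < n)
    (m : ℕ) (hm : 2*n ≤ m) :
    (qGame n a).out σ₁ σ₂ (.var ⟨0,hpos⟩) m = .tgt := by
  obtain ⟨j, rfl⟩ := Nat.exists_eq_add_of_le hm
  clear hm
  induction j with
  | zero => exact outAux_tgt σ₁ σ₂ hpos
  | succ j ih =>
    have hp : (qGame n a).outAux σ₁ σ₂ (.var ⟨0,hpos⟩) (2*n+j)
        = (((qGame n a).outAux σ₁ σ₂ (.var ⟨0,hpos⟩) (2*n+j)).1, .tgt) := by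
      rw [← ih]; rfl
    rw [show 2*n+(j+1) = (2*n+j)+1 from rfl]
    unfold MWGame.out
    rw [step_tgt σ₁ σ₂ _ hp]

end Play
section Cost
open MWGame

variable {n : ℕ} {a : ℕ → ℕ}

lemma sum_two_mul {M : Type*} [AddCommMonoid M] (N : ℕ) (f : ℕ → M) :
    ∑ m ∈ Finset.range (2*N), f m = ∑ k ∈ Finset.range N, (f (2*k) + f (2*k+1)) := by
  induction N with
  | zero => simp
  | succ N ih =>
    rw [show 2*(N+1) = (2*N+1)+1 by ring, Finset.sum_range_succ, Finset.sum_range_succ,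
      Finset.sum_range_succ, ih, add_assoc]

lemma w_var {k k' : Fin n} {b : Bool} {i : Fin 2} :
    (qGame n a).w (.var k) (.val k' b) i =
      if k' = k then
        (if b then (if (i : ℕ) = 0 then a k else 0) else (if (i : ℕ) = 0 then 0 else a k))
      else 0 := rfl

lemma w_val {k : Fin n} {b : Bool} {z : QV n} {i : Fin 2} :
    (qGame n a).w (.val k b) z i = 0 := by cases z <;> rfl

lemma out_var (σ₁ : (qGame n a).Strat1) (σ₂ : (qGame n a).Strat2) (hpos : 0 < n)
    {k : ℕ} (hk : k < n) :
    (qGame n a).out σ₁ σ₂ (.var ⟨0,hpos⟩) (2*k) = .var ⟨k, hk⟩ := by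
  show ((qGame n a).outAux σ₁ σ₂ (.var ⟨0,hpos⟩) (2*k)).2 = _
  rw [(outAux_spec σ₁ σ₂ hpos k hk).1]

lemma out_val (σ₁ : (qGame n a).Strat1) (σ₂ : (qGame n a).Strat2) (hpos : 0 < n)
    {k : ℕ} (hk : k < n) :
    (qGame n a).out σ₁ σ₂ (.var ⟨0,hpos⟩) (2*k+1) = .val ⟨k, hk⟩ (bseq σ₁ σ₂ hpos k) := by
  show ((qGame n a).outAux σ₁ σ₂ (.var ⟨0,hpos⟩) (2*k+1)).2 = _
  rw [(outAux_spec σ₁ σ₂ hpos k hk).2]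

lemma cost_out (σ₁ : (qGame n a).Strat1) (σ₂ : (qGame n a).Strat2) (hpos : 0 < n) :
    (qGame n a).cost ((qGame n a).out σ₁ σ₂ (.var ⟨0,hpos⟩)) =
      fun i : Fin 2 => if (i : ℕ) = 0 then ((Ssum a (bseq σ₁ σ₂ hpos) n : ℕ) : ℕ∞)
               else ((Ssum' a (bseq σ₁ σ₂ hpos) n : ℕ) : ℕ∞) := by
  set ρ := (qGame n a).out σ₁ σ₂ (.var ⟨0,hpos⟩) with hρ
  have hex : ∃ ℓ, ρ ℓ ∈ (qGame n a).F :=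
    ⟨2*n, show ρ (2*n) = .tgt from out_tgt σ₁ σ₂ hpos _ le_rfl⟩
  have hfind : Nat.find hex = 2*n := by
    rw [Nat.find_eq_iff]
    refine ⟨show ρ (2*n) = .tgt from out_tgt σ₁ σ₂ hpos _ le_rfl, ?_⟩
    intro m hm
    show ¬ (ρ m = .tgt)
    have hcase : m = 2*(m/2) ∨ m = 2*(m/2)+1 := by omega
    have hk : m/2 < n := by omega
    rcases hcase with h | h
    · rw [h, hρ, out_var σ₁ σ₂ hpos hk]; simp
    · rw [h, hρ, out_val σ₁ σ₂ hpos hk]; simp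
  show (if h : ∃ ℓ, ρ ℓ ∈ (qGame n a).F then
      fun i => ∑ m ∈ Finset.range (Nat.find h), ((qGame n a).w (ρ m) (ρ (m + 1)) i : ℕ∞)
    else ⊤) = _
  rw [dif_pos hex]
  funext i
  rw [hfind, sum_two_mul n]
  have hterm : ∀ k ∈ Finset.range n,
      ((qGame n a).w (ρ (2*k)) (ρ (2*k+1)) i : ℕ∞) + ((qGame n a).w (ρ (2*k+1)) (ρ (2*k+1+1)) i : ℕ∞)
        = ((if bseq σ₁ σ₂ hpos k then (if (i : ℕ) = 0 then a k else 0)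
            else (if (i : ℕ) = 0 then 0 else a k) : ℕ) : ℕ∞) := by
    intro k hk
    have hk' : k < n := Finset.mem_range.mp hk
    rw [hρ, out_var σ₁ σ₂ hpos hk', out_val σ₁ σ₂ hpos hk', w_var, w_val, if_pos rfl]
    simp
  rw [Finset.sum_congr rfl hterm]
  rcases Fin.exists_fin_two.mp ⟨i, rfl⟩ with rfl | rfl
  · simp only [Fin.val_zero, if_pos rfl, Ssum]
    rw [Nat.cast_sum]
    exact Finset.sum_congr rfl (fun k _ => by by_cases h : bseq σ₁ σ₂ hpos k <;> simp [h])
  · simp only [Fin.val_one, Ssum']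
    norm_num

end Cost
section Char
open MWGame

variable {n : ℕ} {a : ℕ → ℕ}

lemma leC_char (σ₁ : (qGame n a).Strat1) (σ₂ : (qGame n a).Strat2) (hpos : 0 < n) {T : ℕ}
    (hT : T ≤ ∑ i ∈ Finset.range n, a i) :
    leC ((qGame n a).cost ((qGame n a).out σ₁ σ₂ (.var ⟨0, hpos⟩)))
      (fun i => if (i : ℕ) = 0 then (T : ℕ∞)
                else (((∑ i ∈ Finset.range n, a i) - T : ℕ) : ℕ∞))
    ↔ Ssum a (bseq σ₁ σ₂ hpos) n = T := by
  have hsum : Ssum a (bseq σ₁ σ₂ hpos) n + Ssum' a (bseq σ₁ σ₂ hpos) n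
      = ∑ i ∈ Finset.range n, a i := by
    rw [Ssum, Ssum', ← Finset.sum_add_distrib]
    exact Finset.sum_congr rfl (fun k _ => by by_cases h : bseq σ₁ σ₂ hpos k <;> simp [h])
  rw [leC, cost_out σ₁ σ₂ hpos, Pi.le_def, Fin.forall_fin_two]
  simp only [Fin.val_zero, Fin.val_one, eq_self_iff_true, if_true, if_pos rfl,
    if_neg (by norm_num : ¬(1:ℕ) = 0), Nat.cast_le]
  omega

end Char
section Comb
open MWGame

variable {n : ℕ} {a : ℕ → ℕ}

lemma hlist_congr {c c' : ℕ → Bool} : ∀ k, (∀ i, i < k → c i = c' i) → hlist n c k = hlist n c' k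
  | 0, _ => rfl
  | k+1, h => by
    unfold hlist
    rw [hlist_congr k (fun i hi => h i (by omega)), h k (by omega)]

lemma Ssum_congr {c c' : ℕ → Bool} (k : ℕ) (h : ∀ i, i < k → c i = c' i) :
    Ssum a c k = Ssum a c' k :=
  Finset.sum_congr rfl (fun i hi => by rw [h i (Finset.mem_range.mp hi)])

lemma Ssum_succ (c : ℕ → Bool) (k : ℕ) :
    Ssum a c (k+1) = Ssum a c k + (if c k then a k else 0) :=
  Finset.sum_range_succ _ _

lemma Ssum_update (c : ℕ → Bool) (k : ℕ) (bb : Bool) :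
    Ssum a (Function.update c k bb) (k+1) = Ssum a c k + (if bb then a k else 0) := by
  rw [Ssum_succ, Function.update_self,
    Ssum_congr k (fun i hi => Function.update_of_ne (by omega) _ _)]

/-- Player 1's choice function induced by a strategy. -/
def cf1 (σ₁ : (qGame n a).Strat1) (c : ℕ → Bool) (k : ℕ) : Bool :=
  if h : k < n then decodeB (σ₁.1 (hlist n c k) (.var ⟨k, h⟩)) else false

lemma cf1_congr (σ₁ : (qGame n a).Strat1) {c c' : ℕ → Bool} (k : ℕ)
    (h : ∀ i, i < k → c i = c' i) : cf1 σ₁ c k = cf1 σ₁ c' k := by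
  unfold cf1
  split
  · rw [hlist_congr k h]
  · rfl

lemma step_var1 (σ₁ : (qGame n a).Strat1) (σ₂ : (qGame n a).Strat2) (v : QV n)
    {L : List (QV n)} {k : Fin n} {m : ℕ} (h : (qGame n a).outAux σ₁ σ₂ v m = (L, .var k))
    (hp : (k : ℕ) % 2 = 0) :
    (qGame n a).outAux σ₁ σ₂ v (m+1) = (L ++ [.var k], σ₁.1 L (.var k)) := by
  rw [outAux_succ_eq, h, if_pos (mem_V1_var.mpr hp)]

lemma step_var2 (σ₁ : (qGame n a).Strat1) (σ₂ : (qGame n a).Strat2) (v : QV n)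
    {L : List (QV n)} {k : Fin n} {m : ℕ} (h : (qGame n a).outAux σ₁ σ₂ v m = (L, .var k))
    (hp : ¬ (k : ℕ) % 2 = 0) :
    (qGame n a).outAux σ₁ σ₂ v (m+1) = (L ++ [.var k], σ₂.1 L (.var k)) := by
  rw [outAux_succ_eq, h, if_neg (fun hm => hp (mem_V1_var.mp hm))]

lemma bseq_even (σ₁ : (qGame n a).Strat1) (σ₂ : (qGame n a).Strat2) (hpos : 0 < n)
    {k : ℕ} (hk : k < n) (hp : k % 2 = 0) :
    bseq σ₁ σ₂ hpos k = cf1 σ₁ (bseq σ₁ σ₂ hpos) k := by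
  have h2 := step_var1 σ₁ σ₂ (.var ⟨0,hpos⟩) (outAux_spec σ₁ σ₂ hpos k hk).1 hp
  show decodeB ((qGame n a).outAux σ₁ σ₂ (.var ⟨0,hpos⟩) (2*k+1)).2 = _
  rw [h2, cf1, dif_pos hk]

lemma bseq_odd (σ₁ : (qGame n a).Strat1) (σ₂ : (qGame n a).Strat2) (hpos : 0 < n)
    {k : ℕ} (hk : k < n) (hp : ¬ k % 2 = 0) :
    bseq σ₁ σ₂ hpos k = decodeB (σ₂.1 (hlist n (bseq σ₁ σ₂ hpos) k) (.var ⟨k, hk⟩)) := by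
  have h2 := step_var2 σ₁ σ₂ (.var ⟨0,hpos⟩) (outAux_spec σ₁ σ₂ hpos k hk).1 hp
  show decodeB ((qGame n a).outAux σ₁ σ₂ (.var ⟨0,hpos⟩) (2*k+1)).2 = _
  rw [h2]

/-- Player 2's strategy realizing a fixed choice sequence `c`. -/
def strat2Of (c : ℕ → Bool) : (qGame n a).Strat2 :=
  ⟨fun _ u => match u with
    | .var k => .val k (c k)
    | _ => .tgt,
   by
    intro h u hu
    match u with
    | .var k => exact rfl
    | .val k b => exact absurd mem_V1_val hu
    | .tgt => exact absurd mem_V1_tgt hu⟩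

lemma bseq_strat2Of (σ₁ : (qGame n a).Strat1) (c : ℕ → Bool) (hpos : 0 < n)
    (hcons : ∀ i, i < n → i % 2 = 0 → c i = cf1 σ₁ c i) :
    ∀ i, i < n → bseq σ₁ (strat2Of c) hpos i = c i := by
  intro i
  induction i using Nat.strong_induction_on with
  | _ i ih =>
    intro hi
    by_cases hp : i % 2 = 0
    · rw [bseq_even σ₁ _ hpos hi hp,
        cf1_congr σ₁ i (fun j hj => ih j hj (by omega))]
      exact (hcons i hi hp).symm
    · rw [bseq_odd σ₁ _ hpos hi hp]
      rfl

end Comb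
section Main
open MWGame

variable {n : ℕ} {a : ℕ → ℕ} {T : ℕ}

lemma consistent_qss (hpos : 0 < n) (σ₁ : (qGame n a).Strat1)
    (hw : ∀ σ₂, Ssum a (bseq σ₁ σ₂ hpos) n = T) :
    ∀ m, m ≤ n → ∀ c : ℕ → Bool, (∀ i, i < n - m → i % 2 = 0 → c i = cf1 σ₁ c i) →
      qss a T n m (Ssum a c (n - m)) := by
  intro m
  induction m with
  | zero =>
    intro _ c hcons
    show Ssum a c (n - 0) = T
    rw [Nat.sub_zero]
    rw [← hw (strat2Of c)]
    exact (Ssum_congr n (bseq_strat2Of σ₁ c hpos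
      (fun i hi hp => hcons i (by omega) hp))).symm
  | succ m ih =>
    intro hm c hcons
    simp only [qss]
    by_cases hp : (n - (m+1)) % 2 = 0
    · rw [if_pos hp]
      refine ⟨cf1 σ₁ c (n - (m+1)), ?_⟩
      set bb := cf1 σ₁ c (n - (m+1)) with hbb
      have hc' : ∀ i, i < n - m → i % 2 = 0 →
          (Function.update c (n - (m+1)) bb) i
            = cf1 σ₁ (Function.update c (n - (m+1)) bb) i := by
        intro i hi hpe
        have e2 : cf1 σ₁ (Function.update c (n - (m+1)) bb) i = cf1 σ₁ c i :=
          cf1_congr σ₁ i (fun j hj => Function.update_of_ne (by omega) _ _)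
        rcases eq_or_lt_of_le (show i + 1 ≤ n - m from hi) with he | hlt
        · have hik : i = n - (m+1) := by omega
          rw [e2, hik, Function.update_self]
        · have hne : i ≠ n - (m+1) := by omega
          rw [e2, Function.update_of_ne hne]
          exact hcons i (by omega) hpe
      have hq := ih (by omega) (Function.update c (n - (m+1)) bb) hc'
      rw [show n - m = (n - (m+1)) + 1 by omega, Ssum_update] at hq
      exact hq
    · rw [if_neg hp]
      intro bb
      have hc' : ∀ i, i < n - m → i % 2 = 0 →
          (Function.update c (n - (m+1)) bb) i
            = cf1 σ₁ (Function.update c (n - (m+1)) bb) i := by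
        intro i hi hpe
        have e2 : cf1 σ₁ (Function.update c (n - (m+1)) bb) i = cf1 σ₁ c i :=
          cf1_congr σ₁ i (fun j hj => Function.update_of_ne (by omega) _ _)
        have hne : i ≠ n - (m+1) := by
          intro h; rw [h] at hpe; exact hp hpe
        rw [e2, Function.update_of_ne hne]
        exact hcons i (by omega) hpe
      have hq := ih (by omega) (Function.update c (n - (m+1)) bb) hc'
      rw [show n - m = (n - (m+1)) + 1 by omega, Ssum_update] at hq
      exact hq

lemma dir2 (hpos : 0 < n) (σ₁ : (qGame n a).Strat1)
    (hw : ∀ σ₂, Ssum a (bseq σ₁ σ₂ hpos) n = T) : qss a T n n 0 := by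
  have h := consistent_qss hpos σ₁ hw n le_rfl (fun _ => false) (by intro i hi; omega)
  rw [show n - n = 0 by omega] at h
  simpa [Ssum] using h

/-- Choice of Player 1 at an existential node. -/
noncomputable def pick (a : ℕ → ℕ) (T n k s : ℕ) : Bool :=
  if h : ∃ bb : Bool, qss a T n (n - (k+1)) (s + if bb then a k else 0) then h.choose
  else false

lemma pick_spec {k s : ℕ}
    (h : ∃ bb : Bool, qss a T n (n - (k+1)) (s + if bb then a k else 0)) :
    qss a T n (n - (k+1)) (s + if pick a T n k s then a k else 0) := by
  rw [pick, dif_pos h]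
  exact h.choose_spec

/-- Sum extracted from a history list. -/
def sOf (a : ℕ → ℕ) {n : ℕ} (l : List (QV n)) : ℕ :=
  (l.map (fun u => match u with | QV.val i b => if b then a (i : ℕ) else 0 | _ => 0)).sum

lemma sOf_hlist (c : ℕ → Bool) : ∀ k, k ≤ n → sOf a (hlist n c k) = Ssum a c k := by
  intro k
  induction k with
  | zero => intro _; simp [sOf, hlist, Ssum]
  | succ k ih =>
    intro hk
    have hk' : k < n := by omega
    rw [Ssum_succ, ← ih (by omega)]
    simp [hlist, dif_pos hk', sOf]

/-- Player 1's strategy extracted from a true QBF-like formula. -/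
noncomputable def strat1Of (a : ℕ → ℕ) (T n : ℕ) : (qGame n a).Strat1 :=
  ⟨fun l u => match u with
    | QV.var k => QV.val k (pick a T n (k : ℕ) (sOf a l))
    | QV.val k _ => if h : (k : ℕ) + 1 < n then QV.var ⟨(k : ℕ) + 1, h⟩ else QV.tgt
    | QV.tgt => QV.tgt,
   by
    intro l u _
    match u with
    | QV.var k => exact rfl
    | QV.val k b =>
      dsimp only
      split
      · exact rfl
      · next h => exact (by have := k.isLt; omega : (k : ℕ) + 1 = n)
    | QV.tgt => exact trivial⟩

lemma bseq_strat1Of (σ₂ : (qGame n a).Strat2) (hpos : 0 < n) {k : ℕ}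
    (hk : k < n) (hp : k % 2 = 0) :
    bseq (strat1Of a T n) σ₂ hpos k
      = pick a T n k (Ssum a (bseq (strat1Of a T n) σ₂ hpos) k) := by
  rw [bseq_even _ σ₂ hpos hk hp, cf1, dif_pos hk]
  show decodeB (QV.val _ (pick a T n k (sOf a (hlist n (bseq (strat1Of a T n) σ₂ hpos) k)))) = _
  rw [sOf_hlist _ k (by omega)]
  rfl

lemma dir1_aux (hpos : 0 < n) (hq : qss a T n n 0) (σ₂ : (qGame n a).Strat2) :
    ∀ k, k ≤ n → qss a T n (n - k) (Ssum a (bseq (strat1Of a T n) σ₂ hpos) k) := by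
  intro k
  induction k with
  | zero =>
    intro _
    simpa [Ssum] using hq
  | succ k ih =>
    intro hk
    have hk' : k < n := by omega
    have hq' := ih (by omega)
    rw [show n - k = (n - (k+1)) + 1 by omega] at hq'
    simp only [qss] at hq'
    rw [show n - (n - (k+1) + 1) = k by omega] at hq'
    by_cases hp : k % 2 = 0
    · rw [if_pos hp] at hq'
      have := pick_spec hq'
      rw [← bseq_strat1Of σ₂ hpos hk' hp] at this
      rw [Ssum_succ]
      exact this
    · rw [if_neg hp] at hq'
      rw [Ssum_succ]
      exact hq' _
end Main
/-- Correctness of the reduction from Quantified Subset-Sum: `Ψ` is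
true iff Player 1 can ensure the cost profile `(T, Σᵢ aᵢ − T)` from `x₁` (w.r.t. the
componentwise order) in the associated 2-weighted reachability game. -/
theorem stmt17 (n : ℕ) (hn : Odd n) (hpos : 0 < n) (a : ℕ → ℕ) (T : ℕ)
    (hT : T ≤ ∑ i ∈ Finset.range n, a i) :
    qss a T n n 0 ↔
      ∃ σ₁ : (qGame n a).Strat1, ∀ σ₂ : (qGame n a).Strat2,
        leC ((qGame n a).cost ((qGame n a).out σ₁ σ₂ (.var ⟨0, hpos⟩)))
          (fun i => if (i : ℕ) = 0 then (T : ℕ∞)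
                    else (((∑ i ∈ Finset.range n, a i) - T : ℕ) : ℕ∞)) := by
  constructor
  · intro hq
    refine ⟨strat1Of a T n, fun σ₂ => ?_⟩
    rw [leC_char _ σ₂ hpos hT]
    have h := dir1_aux hpos hq σ₂ n le_rfl
    rw [show n - n = 0 by omega] at h
    exact h
  · rintro ⟨σ₁, hσ⟩
    exact dir2 hpos σ₁ (fun σ₂ => (leC_char σ₁ σ₂ hpos hT).mp (hσ σ₂))
end

section
/- Let G be a quantitative reachability game with penalty function p and vertex set V, let X be its extended game X_CP or X_PC, let v ∈ V, let (x,y) ∈ ℕ², and let ≲ be either the componentwise order ≤_C or the lexicographic order ≤_L on (ℕ ∪ {∞})². If there exists a strategy σ₁ of Player 1 from v^X in X such that Cost^X(Out(σ₁,σ₂,v^X)) ≲ (x,y) for every strategy σ₂ of Player 2, then there exists a strategy σ₁' of Player 1 from v^X such that for every strategy σ₂ of Player 2: Cost^X(Out(σ₁',σ₂,v^X)) ≲ (x,y) and the play Out(σ₁',σ₂,v^X) visits the target set of X within at most 2·|V| steps (i.e., LengthF(Out(σ₁',σ₂,v^X)) ≤ 2·|V|, where |V| is the number of vertices of the original game G).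 -/
open Classical

/-- A quantitative reachability game equipped with a penalty function: a finite directed
graph with Player 1's vertices `V1`, edge relation `E` (every vertex has a successor),
a cost `c` and a penalty `p` on every edge, and a target set `F`. -/
structure QRGame (V : Type*) where
  V1 : Set V
  E : V → V → Prop
  succ_nonempty : ∀ v, ∃ v', E v v'
  c : V → V → ℕ
  F : Set V
  p : V → V → ℕ

namespace QRGame

variable {V : Type*}

/-- Multi-strategies of Player 1: for every history (strict past, current vertex) a
nonempty set of successors of the current vertex, at Player 1's vertices. -/
def MultiStrat (G : QRGame V) :=
  { θ : List V → V → Set V //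
      ∀ h u, u ∈ G.V1 → (θ h u).Nonempty ∧ ∀ z ∈ θ h u, G.E u z }

/-- The set of plays from `v` consistent with the multi-strategy `θ` (and with an
arbitrary behaviour of Player 2). -/
def consistent (G : QRGame V) (θ : G.MultiStrat) (v : V) : Set (ℕ → V) :=
  { ρ | ρ 0 = v ∧ ∀ n,
      (ρ n ∈ G.V1 → ρ (n + 1) ∈ θ.1 ((List.range n).map ρ) (ρ n)) ∧
      (ρ n ∉ G.V1 → G.E (ρ n) (ρ (n + 1))) }

/-- The cost of a play: the sum of the edge costs up to the first visit of the target
set, and `∞` if the target set is never visited. -/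
noncomputable def qcost (G : QRGame V) (ρ : ℕ → V) : ℕ∞ :=
  if h : ∃ l, ρ l ∈ G.F then
    ∑ n ∈ Finset.range (Nat.find h), (G.c (ρ n) (ρ (n + 1)) : ℕ∞)
  else ⊤

/-- `wCost(θ,v)`: the worst cost of a play consistent with `θ` from `v`. -/
noncomputable def wCost (G : QRGame V) (θ : G.MultiStrat) (v : V) : ℕ∞ :=
  sSup (G.qcost '' G.consistent θ v)

/-- The penalty of Player 1 w.r.t. `θ` along a play: the (possibly infinite) sum, over
all positions owned by Player 1, of the penalties of the edges blocked by `θ` there. -/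
noncomputable def penAlong [Fintype V] (G : QRGame V) (θ : G.MultiStrat) (ρ : ℕ → V) : ℕ∞ :=
  ∑' n : ℕ,
    if ρ n ∈ G.V1 then
      ∑ u : V, (if G.E (ρ n) u ∧ u ∉ θ.1 ((List.range n).map ρ) (ρ n)
                then (G.p (ρ n) u : ℕ∞) else 0)
    else 0

/-- `Pen(θ,v)`: the worst penalty of a play consistent with `θ` from `v`. -/
noncomputable def pen [Fintype V] (G : QRGame V) (θ : G.MultiStrat) (v : V) : ℕ∞ :=
  sSup ((G.penAlong θ) '' G.consistent θ v)

/-- Vertices of the extended game: a copy `Sum.inl v` of every vertex `v` of the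
original game, together with a vertex `Sum.inr (v, A)` for every Player 1 vertex `v`
and every nonempty set `A` of successors of `v` (a choice of Player 1 at `v`). -/
def XV (G : QRGame V) : Type _ :=
  V ⊕ { q : V × Set V // q.1 ∈ G.V1 ∧ q.2.Nonempty ∧ ∀ u ∈ q.2, G.E q.1 u }

/-- Pairs `(x,y)` as weight tuples, with the two components swapped when `swap` is true
(`swap = false` gives the `CP` extended game, `swap = true` the `PC` one). -/
def mkW (swap : Bool) (x y : ℕ) : Fin 2 → ℕ :=
  fun i => if (i : ℕ) = 0 then (if swap then y else x) else (if swap then x else y)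

/-- The extended game `X_CP` (for `swap = false`) or `X_PC` (for `swap = true`) of a
quantitative reachability game with penalties, as a 2-weighted reachability game. -/
noncomputable def extGame [Fintype V] (G : QRGame V) (swap : Bool) : MWGame (G.XV) 2 where
  V1 := { z | ∃ v ∈ G.V1, z = Sum.inl v }
  E := fun z z' =>
    match z, z' with
    | Sum.inl v, Sum.inl v' => v ∉ G.V1 ∧ G.E v v'
    | Sum.inl v, Sum.inr q => q.1.1 = v
    | Sum.inr q, Sum.inl u => u ∈ q.1.2
    | Sum.inr _, Sum.inr _ => False
  succ_nonempty := by
    rintro (v | q)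
    · by_cases hv : v ∈ G.V1
      · exact ⟨Sum.inr ⟨(v, { u | G.E v u }), hv, G.succ_nonempty v, fun u hu => hu⟩, rfl⟩
      · obtain ⟨v', hv'⟩ := G.succ_nonempty v
        exact ⟨Sum.inl v', hv, hv'⟩
    · obtain ⟨u, hu⟩ := q.2.2.1
      exact ⟨Sum.inl u, hu⟩
  w := fun z z' =>
    match z, z' with
    | Sum.inl v, Sum.inl v' => mkW swap (G.c v v') 0
    | Sum.inl _, Sum.inr q =>
        mkW swap 0 (∑ u : V, if G.E q.1.1 u ∧ u ∉ q.1.2 then G.p q.1.1 u else 0)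
    | Sum.inr q, Sum.inl u => mkW swap (G.c q.1.1 u) 0
    | Sum.inr _, Sum.inr _ => fun _ => 0
  F := { z | ∃ v ∈ G.F, z = Sum.inl v }

end QRGame

/-- The pair `(x, y)` as a 2-dimensional cost profile. -/
def pair2 (x y : ℕ∞) : CostP 2 := fun i => if (i : ℕ) = 0 then x else y
section Stmt19Aux

/-! ### Order lemmas for `leC` / `leL` on 2-dimensional cost profiles -/

lemma fin2_val_cases (i : Fin 2) : (i : ℕ) = 0 ∨ (i : ℕ) = 1 := by omega

lemma leC2_to_leL {a b : CostP 2} (h : ∀ j, a j ≤ b j) : leL a b := by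
  by_cases h0 : a 0 = b 0
  · by_cases h1 : a 1 = b 1
    · exact Or.inl (funext fun i => by
        rcases fin2_val_cases i with hi | hi <;>
          [skip; skip] <;>
          · have : i = (if (i:ℕ) = 0 then (0:Fin 2) else 1) := by
              rcases fin2_val_cases i with h | h <;> simp [h] <;> exact Fin.ext (by omega)
            first
              | (exact (by rw [show i = (0:Fin 2) from Fin.ext (by omega)]; exact h0))
              | (exact (by rw [show i = (1:Fin 2) from Fin.ext (by omega)]; exact h1)))
    · refine Or.inr ⟨1, fun j hj => ?_, lt_of_le_of_ne (h 1) h1⟩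
      have : (j : ℕ) = 0 := by have := hj; simp [Fin.lt_def] at this; omega
      rw [show j = (0:Fin 2) from Fin.ext (by omega)]; exact h0
  · refine Or.inr ⟨0, fun j hj => ?_, lt_of_le_of_ne (h 0) h0⟩
    exact absurd hj (by simp [Fin.lt_def])

lemma le_compat {le : CostP 2 → CostP 2 → Prop} (hle : le = leC ∨ le = leL)
    {a b t : CostP 2} (hab : ∀ j, a j ≤ b j) (hbt : le b t) : le a t := by
  rcases hle with rfl | rfl
  · exact fun j => (hab j).trans (hbt j)
  · rcases hbt with rfl | ⟨i, hj, hlt⟩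
    · exact leC2_to_leL hab
    · rcases fin2_val_cases i with hi | hi
    -- i = 0 : b 0 < t 0
      · have hi0 : i = (0 : Fin 2) := Fin.ext (by omega)
        subst hi0
        exact Or.inr ⟨0, fun j hj' => absurd hj' (by simp [Fin.lt_def]),
          lt_of_le_of_lt (hab 0) hlt⟩
      · have hi1 : i = (1 : Fin 2) := Fin.ext (by omega)
        subst hi1
        have hb0 : b 0 = t 0 := hj 0 (by simp [Fin.lt_def])
        rcases lt_or_eq_of_le ((hab 0).trans hb0.le) with h0 | h0
        · exact Or.inr ⟨0, fun j hj' => absurd hj' (by simp [Fin.lt_def]), h0⟩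
        · refine Or.inr ⟨1, fun j hj' => ?_, lt_of_le_of_lt (hab 1) hlt⟩
          rw [show j = (0:Fin 2) from Fin.ext (by have := hj'; simp [Fin.lt_def] at this; omega)]
          exact h0

lemma not_le_top {le : CostP 2 → CostP 2 → Prop} (hle : le = leC ∨ le = leL)
    (x y : ℕ) : ¬ le ⊤ (pair2 x y) := by
  rcases hle with rfl | rfl
  · intro h
    have := h 0
    simp [pair2, Pi.top_apply, top_le_iff] at this
  · rintro (h | ⟨i, hj, hlt⟩)
    · have := congrFun h 0
      simp [pair2, Pi.top_apply] at this
    · rcases fin2_val_cases i with hi | hi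
      · have hi0 : i = (0 : Fin 2) := Fin.ext (by omega)
        subst hi0
        simp [pair2, Pi.top_apply] at hlt
      · have hi1 : i = (1 : Fin 2) := Fin.ext (by omega)
        subst hi1
        have := hj 0 (by simp [Fin.lt_def])
        simp [pair2, Pi.top_apply] at this

end Stmt19Aux
section Stmt19Core

variable {W : Type*} (X : MWGame W 2) (σ₁ : X.Strat1) (s : W)

/-- A history (list of visited vertices, oldest first) consistent with `σ₁` from `s`. -/
def ConsH (h : List W) : Prop :=
  h ≠ [] ∧ h.getD 0 s = s ∧ ∀ i, i + 1 < h.length →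
    X.E (h.getD i s) (h.getD (i+1) s) ∧
    (h.getD i s ∈ X.V1 → h.getD (i+1) s = σ₁.1 (h.take i) (h.getD i s))

/-- Accumulated weight along a history. -/
noncomputable def accH (h : List W) : CostP 2 :=
  fun j => ∑ n ∈ Finset.range (h.length - 1), (X.w (h.getD n s) (h.getD (n+1) s) j : ℕ∞)

/-- `e` is a strictly longer consistent extension of `h`, ending at the same vertex,
with no target vertex visited strictly in between. -/
def ExtH (h e : List W) : Prop :=
  ConsH X σ₁ s e ∧ h.length < e.length ∧ h <+: e ∧
  e.getD (e.length - 1) s = h.getD (h.length - 1) s ∧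
  ∀ i, h.length - 1 ≤ i → i + 1 < e.length → e.getD i s ∉ X.F

/-- A history is final if it has no such extension. -/
def FinalH (h : List W) : Prop := ¬ ∃ e, ExtH X σ₁ s h e

/-- Jump to a final extension, if one exists. -/
noncomputable def jumpH (h : List W) : List W :=
  if c : ∃ e, ExtH X σ₁ s h e ∧ FinalH X σ₁ s e then c.choose else h

/-- The virtual pointer computed from an actual history. -/
noncomputable def ptrH (l : List W) : List W :=
  if _h : l.length ≤ 1 then jumpH X σ₁ s l
  else jumpH X σ₁ s (ptrH (l.dropLast) ++ [l.getD (l.length - 1) s])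
  termination_by l.length
  decreasing_by simp only [List.length_dropLast]; omega

lemma ptrH_le_one {l : List W} (h : l.length ≤ 1) : ptrH X σ₁ s l = jumpH X σ₁ s l := by
  rw [ptrH]; simp [h]

lemma ptrH_ge_two {l : List W} (h : 2 ≤ l.length) :
    ptrH X σ₁ s l = jumpH X σ₁ s (ptrH X σ₁ s l.dropLast ++ [l.getD (l.length - 1) s]) := by
  rw [ptrH]; simp [show ¬ l.length ≤ 1 by omega]

end Stmt19Core
section Stmt19Lists

variable {W : Type*} (X : MWGame W 2) (σ₁ : X.Strat1) (s : W)

lemma getD_of_prefix {h e : List W} (hp : h <+: e) {i : ℕ} (hi : i < h.length) :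
    e.getD i s = h.getD i s := by
  obtain ⟨r, rfl⟩ := hp
  exact List.getD_append h r s i hi

lemma getD_concat_self (l : List W) (x : W) : (l ++ [x]).getD l.length s = x := by
  simp [List.getD_append_right]

lemma accH_concat {l : List W} (hl : l ≠ []) (x : W) (j : Fin 2) :
    accH X s (l ++ [x]) j = accH X s l j
      + (X.w (l.getD (l.length - 1) s) x j : ℕ∞) := by
  have hlen : (l ++ [x]).length - 1 = l.length := by simp
  have h1 : 1 ≤ l.length := List.length_pos_iff.mpr hl
  unfold accH
  rw [hlen, show l.length = (l.length - 1) + 1 by omega, Finset.sum_range_succ,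
    show l.length - 1 + 1 = l.length by omega]
  congr 1
  · apply Finset.sum_congr rfl
    intro n hn
    simp only [Finset.mem_range] at hn
    rw [List.getD_append _ _ _ _ (by omega), List.getD_append _ _ _ _ (by omega)]
  · rw [List.getD_append _ _ _ _ (by omega), getD_concat_self]

lemma accH_prefix_le {h e : List W} (hp : h <+: e) (hh : h ≠ []) (j : Fin 2) :
    accH X s h j ≤ accH X s e j := by
  unfold accH
  have hle : h.length - 1 ≤ e.length - 1 := by
    have := hp.length_le; omega
  have h1 : 1 ≤ h.length := List.length_pos_iff.mpr hh
  have heq : ∀ n ∈ Finset.range (h.length - 1),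
      (X.w (h.getD n s) (h.getD (n+1) s) j : ℕ∞)
        = (X.w (e.getD n s) (e.getD (n+1) s) j : ℕ∞) := by
    intro n hn
    simp only [Finset.mem_range] at hn
    rw [getD_of_prefix s hp (by omega : n < h.length),
      getD_of_prefix s hp (by omega : n + 1 < h.length)]
  rw [Finset.sum_congr rfl heq]
  exact Finset.sum_le_sum_of_subset (Finset.range_subset_range.mpr hle)

lemma ConsH_concat {l : List W} (hc : ConsH X σ₁ s l) {x : W}
    (hE : X.E (l.getD (l.length - 1) s) x)
    (hσ : l.getD (l.length - 1) s ∈ X.V1 →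
      x = σ₁.1 l.dropLast (l.getD (l.length - 1) s)) :
    ConsH X σ₁ s (l ++ [x]) := by
  obtain ⟨hne, h0, hstep⟩ := hc
  have h1 : 1 ≤ l.length := List.length_pos_iff.mpr hne
  refine ⟨by simp, ?_, ?_⟩
  · rw [List.getD_append _ _ _ _ (by omega)]; exact h0
  · intro i hi
    simp only [List.length_append, List.length_singleton] at hi
    rcases Nat.lt_or_ge (i + 1) l.length with hlt | hge
    · rw [List.getD_append _ _ _ _ (by omega), List.getD_append _ _ _ _ hlt,
        List.take_append_of_le_length (by omega)]
      exact hstep i hlt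
    · have hieq : i = l.length - 1 := by omega
      subst hieq
      rw [List.getD_append _ _ _ _ (by omega),
        show l.length - 1 + 1 = l.length by omega, getD_concat_self]
      refine ⟨hE, fun hv => ?_⟩
      rw [List.take_append_of_le_length (by omega), ← List.dropLast_eq_take]
      exact hσ hv

lemma ConsH_ne_nil {l : List W} (hc : ConsH X σ₁ s l) : l ≠ [] := hc.1

end Stmt19Lists
section Stmt19Out

variable {W : Type*} (X : MWGame W 2) (σ₁ : X.Strat1) (s : W)

lemma outAux_fst (σ₂ : X.Strat2) (n : ℕ) :
    (X.outAux σ₁ σ₂ s n).1 = (List.range n).map (X.out σ₁ σ₂ s) := by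
  induction n with
  | zero => simp [MWGame.outAux]
  | succ n ih =>
    simp only [MWGame.outAux, List.range_succ, List.map_append, List.map_cons,
      List.map_nil, ih]
    rfl

lemma out_zero (σ₂ : X.Strat2) : X.out σ₁ σ₂ s 0 = s := rfl

lemma out_succ (σ₂ : X.Strat2) (n : ℕ) :
    X.out σ₁ σ₂ s (n+1) =
      if X.out σ₁ σ₂ s n ∈ X.V1 then
        σ₁.1 ((List.range n).map (X.out σ₁ σ₂ s)) (X.out σ₁ σ₂ s n)
      else σ₂.1 ((List.range n).map (X.out σ₁ σ₂ s)) (X.out σ₁ σ₂ s n) := by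
  show (X.outAux σ₁ σ₂ s (n+1)).2 = _
  simp only [MWGame.out, MWGame.outAux, outAux_fst]
  exact if_congr Iff.rfl rfl rfl

lemma realize_chain (ν : ℕ → List W) (hcons : ∀ k, ConsH X σ₁ s (ν k))
    (hpre : ∀ k, ν k <+: ν (k+1)) (hlen : ∀ k, k < (ν k).length) :
    ∃ σ₂ : X.Strat2, ∀ k, X.out σ₁ σ₂ s k = (ν k).getD k s := by
  set ρ : ℕ → W := fun k => (ν k).getD k s with hρ
  have hmono : ∀ k k', k ≤ k' → ν k <+: ν k' := by
    intro k k' hk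
    induction k' with
    | zero => rw [Nat.le_zero.mp hk]
    | succ m ih =>
      rcases Nat.lt_or_ge k (m+1) with h | h
      · exact (ih (by omega)).trans (hpre m)
      · rw [show k = m + 1 by omega]
  have hAG : ∀ i k, i ≤ k → (ν k).getD i s = ρ i := by
    intro i k hik
    exact getD_of_prefix s (hmono i k hik) (hlen i)
  have htake : ∀ n, (ν (n+1)).take n = (List.range n).map ρ := by
    intro n
    have hn1 : n < (ν (n+1)).length := by have := hlen (n+1); omega
    apply List.ext_getElem
    · simp [Nat.min_eq_left hn1.le]
    · intro i h1 h2
      simp only [List.getElem_take, List.getElem_map, List.getElem_range]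
      have hi : i < n := by simp [Nat.min_eq_left hn1.le] at h1; omega
      rw [← List.getD_eq_getElem _ s, hAG i (n+1) (by omega)]
  have hf : ∀ (h : List W) (u : W), u ∉ X.V1 → X.E u
      (if _hE : X.E u (ρ (h.length + 1)) then ρ (h.length + 1)
        else (X.succ_nonempty u).choose) := by
    intro h u _
    split
    · assumption
    · exact (X.succ_nonempty u).choose_spec
  refine ⟨⟨fun past u => if _hE : X.E u (ρ (past.length + 1)) then ρ (past.length + 1)
      else (X.succ_nonempty u).choose, hf⟩, ?_⟩
  set σ₂ : X.Strat2 := ⟨fun past u => if _hE : X.E u (ρ (past.length + 1)) then ρ (past.length + 1)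
      else (X.succ_nonempty u).choose, hf⟩ with hσ₂
  intro k
  induction k using Nat.strong_induction_on with
  | _ k ih =>
    match k with
    | 0 => exact ((hcons 0).2.1).symm
    | Nat.succ n =>
      have hlen1 : n + 1 < (ν (n+1)).length := hlen (n+1)
      have hstep := ((hcons (n+1)).2.2) n hlen1
      have hgn : (ν (n+1)).getD n s = ρ n := hAG n (n+1) (by omega)
      have houtn := ih n (by omega)
      rw [hgn] at hstep
      rw [out_succ, houtn]
      have hmap : (List.range n).map (X.out σ₁ σ₂ s) = (List.range n).map ρ := by
        apply List.map_congr_left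
        intro a ha
        exact ih a (by have := List.mem_range.mp ha; omega)
      by_cases hv : ρ n ∈ X.V1
      · rw [if_pos hv, hmap]
        rw [← htake n]
        exact (hstep.2 hv).symm
      · rw [if_neg hv]
        show (if _hE : X.E (ρ n) (ρ (((List.range n).map (X.out σ₁ σ₂ s)).length + 1))
            then ρ (((List.range n).map (X.out σ₁ σ₂ s)).length + 1)
            else (X.succ_nonempty (ρ n)).choose) = _
        simp only [List.length_map, List.length_range]
        rw [dif_pos hstep.1]

end Stmt19Out
section Stmt19Chain

/-- A recursively chosen chain. -/
noncomputable def chainOf {α : Type*} (P : α → Prop) (R : α → α → Prop) (a0 : α) (h0 : P a0)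
    (hstep : ∀ a, P a → ∃ b, P b ∧ R a b) : ℕ → {a // P a}
  | 0 => ⟨a0, h0⟩
  | k+1 => ⟨(hstep (chainOf P R a0 h0 hstep k).1 (chainOf P R a0 h0 hstep k).2).choose,
      (hstep (chainOf P R a0 h0 hstep k).1 (chainOf P R a0 h0 hstep k).2).choose_spec.1⟩

lemma chainOf_zero {α : Type*} (P : α → Prop) (R : α → α → Prop) (a0 : α) (h0 : P a0)
    (hstep : ∀ a, P a → ∃ b, P b ∧ R a b) : (chainOf P R a0 h0 hstep 0).1 = a0 := rfl

lemma chainOf_succ_rel {α : Type*} (P : α → Prop) (R : α → α → Prop) (a0 : α) (h0 : P a0)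
    (hstep : ∀ a, P a → ∃ b, P b ∧ R a b) (k : ℕ) :
    R (chainOf P R a0 h0 hstep k).1 (chainOf P R a0 h0 hstep (k+1)).1 :=
  (hstep (chainOf P R a0 h0 hstep k).1 (chainOf P R a0 h0 hstep k).2).choose_spec.2

variable {W : Type*} (X : MWGame W 2) (σ₁ : X.Strat1) (s : W)
  (le : CostP 2 → CostP 2 → Prop) (t : CostP 2)

lemma exists_final
    (hguar : ∀ σ₂ : X.Strat2, le (X.cost (X.out σ₁ σ₂ s)) t)
    (htop : ¬ le (⊤ : CostP 2) t)
    {h : List W} (hc : ConsH X σ₁ s h)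
    (hFf : ∀ i, i + 1 < h.length → h.getD i s ∉ X.F)
    (_hlast : h.getD (h.length - 1) s ∉ X.F) :
    ∃ e, h <+: e ∧ ConsH X σ₁ s e ∧ (∀ i, i + 1 < e.length → e.getD i s ∉ X.F) ∧
      e.getD (e.length - 1) s = h.getD (h.length - 1) s ∧ FinalH X σ₁ s e := by
  by_contra hno
  push_neg at hno
  -- every packaged extension has a strict extension
  set Pkg : List W → Prop := fun e => h <+: e ∧ ConsH X σ₁ s e ∧
    (∀ i, i + 1 < e.length → e.getD i s ∉ X.F) ∧
    e.getD (e.length - 1) s = h.getD (h.length - 1) s with hPkg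
  have h1 : 1 ≤ h.length := List.length_pos_iff.mpr hc.1
  have hstep : ∀ e, Pkg e → ∃ e', Pkg e' ∧ ExtH X σ₁ s e e' := by
    intro e ⟨hpe, hce, hfe, hle'⟩
    have hnf : ¬ FinalH X σ₁ s e := hno e hpe hce hfe hle'
    obtain ⟨e', hce', hlen', hpe', hlaste', hff'⟩ := not_not.mp hnf
    have h1e : 1 ≤ e.length := List.length_pos_iff.mpr hce.1
    refine ⟨e', ⟨hpe.trans hpe', hce', ?_, by rw [hlaste', hle']⟩,
      ⟨hce', hlen', hpe', hlaste', hff'⟩⟩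
    intro i hi
    rcases Nat.lt_or_ge (i + 1) e.length with hlt | hge
    · rw [getD_of_prefix s hpe' (by omega : i < e.length)]
      exact hfe i hlt
    · exact hff' i (by omega) hi
  set c : ℕ → {e // Pkg e} :=
    chainOf Pkg (ExtH X σ₁ s) h ⟨List.prefix_refl h, hc, hFf, rfl⟩ hstep with hcdef
  have hrel : ∀ k, ExtH X σ₁ s (c k).1 (c (k+1)).1 := fun k => chainOf_succ_rel _ _ _ _ _ k
  have hpre : ∀ k, (c k).1 <+: (c (k+1)).1 := fun k => (hrel k).2.2.1
  have hlt : ∀ k, (c k).1.length < (c (k+1)).1.length := fun k => (hrel k).2.1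
  have hlen : ∀ k, k + 1 ≤ (c k).1.length := by
    intro k
    induction k with
    | zero => exact h1
    | succ m ih => have := hlt m; omega
  obtain ⟨σ₂, hσ₂⟩ := realize_chain X σ₁ s (fun k => (c k).1)
    (fun k => (c k).2.2.1) hpre (fun k => by show k < (c k).1.length; have := hlen k; omega)
  have hnoF : ∀ k, X.out σ₁ σ₂ s k ∉ X.F := by
    intro k
    rw [hσ₂ k, ← getD_of_prefix s (hpre k) (by have := hlen k; omega : k < (c k).1.length)]
    exact (c (k+1)).2.2.2.1 k (by have := hlen (k+1); omega)
  have hcost : X.cost (X.out σ₁ σ₂ s) = (⊤ : CostP 2) := by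
    unfold MWGame.cost
    rw [dif_neg]
    push_neg
    exact fun l => hnoF l
  have := hguar σ₂
  rw [hcost] at this
  exact htop this

end Stmt19Chain
section Stmt19Jump

variable {W : Type*} (X : MWGame W 2) (σ₁ : X.Strat1) (s : W)
  {le : CostP 2 → CostP 2 → Prop} {t : CostP 2}

lemma jumpH_no_ext {h : List W} (hc : ConsH X σ₁ s h)
    (hlast : h.getD (h.length - 1) s ∈ X.F) : jumpH X σ₁ s h = h := by
  unfold jumpH
  rw [dif_neg]
  rintro ⟨e, ⟨hce, hlen, hpe, hlaste, hff⟩, -⟩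
  have h1 : 1 ≤ h.length := List.length_pos_iff.mpr hc.1
  refine hff (h.length - 1) le_rfl (by omega) ?_
  rw [getD_of_prefix s hpe (by omega : h.length - 1 < h.length)]
  exact hlast

lemma jumpH_spec
    (hguar : ∀ σ₂ : X.Strat2, le (X.cost (X.out σ₁ σ₂ s)) t)
    (htop : ¬ le (⊤ : CostP 2) t)
    {h : List W} (hc : ConsH X σ₁ s h)
    (hFf : ∀ i, i + 1 < h.length → h.getD i s ∉ X.F)
    (hlast : h.getD (h.length - 1) s ∉ X.F) :
    h <+: jumpH X σ₁ s h ∧ ConsH X σ₁ s (jumpH X σ₁ s h) ∧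
    (∀ i, i + 1 < (jumpH X σ₁ s h).length → (jumpH X σ₁ s h).getD i s ∉ X.F) ∧
    (jumpH X σ₁ s h).getD ((jumpH X σ₁ s h).length - 1) s = h.getD (h.length - 1) s ∧
    FinalH X σ₁ s (jumpH X σ₁ s h) := by
  have h1 : 1 ≤ h.length := List.length_pos_iff.mpr hc.1
  unfold jumpH
  split
  case isTrue c =>
    obtain ⟨⟨hce, hlen, hpe, hlaste, hff⟩, hfin⟩ := c.choose_spec
    refine ⟨hpe, hce, ?_, hlaste, hfin⟩
    intro i hi
    rcases Nat.lt_or_ge (i + 1) h.length with hlt | hge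
    · rw [getD_of_prefix s hpe (by omega : i < h.length)]
      exact hFf i hlt
    · exact hff i (by omega) hi
  case isFalse c =>
    obtain ⟨e, hpe, hce, hfe, hlaste, hfin⟩ :=
      exists_final X σ₁ s le t hguar htop hc hFf hlast
    rcases Nat.lt_or_ge h.length e.length with hlt | hge
    · exact absurd ⟨e, ⟨hce, hlt, hpe, hlaste, fun i hi1 hi2 => hfe i hi2⟩, hfin⟩ c
    · have heq : h = e := hpe.eq_of_length (le_antisymm hpe.length_le hge)
      subst heq
      exact ⟨List.prefix_refl _, hc, hFf, rfl, hfin⟩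

/-- Cost guarantee along a final (target-reaching) consistent history. -/
lemma fincost
    (hguar : ∀ σ₂ : X.Strat2, le (X.cost (X.out σ₁ σ₂ s)) t)
    {e : List W} (hce : ConsH X σ₁ s e)
    (hfe : ∀ i, i + 1 < e.length → e.getD i s ∉ X.F)
    (hlaste : e.getD (e.length - 1) s ∈ X.F) :
    le (accH X s e) t := by
  have h1 : 1 ≤ e.length := List.length_pos_iff.mpr hce.1
  -- extend `e` to an infinite consistent play
  have hstep : ∀ l, (ConsH X σ₁ s l ∧ e <+: l) →
      ∃ l', (ConsH X σ₁ s l' ∧ e <+: l') ∧ (l <+: l' ∧ l'.length = l.length + 1) := by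
    intro l ⟨hcl, hel⟩
    set u := l.getD (l.length - 1) s with hu
    by_cases hv : u ∈ X.V1
    · refine ⟨l ++ [σ₁.1 l.dropLast u],
        ⟨ConsH_concat X σ₁ s hcl (σ₁.2 _ _ hv) (fun _ => rfl),
          hel.trans (List.prefix_append _ _)⟩, List.prefix_append _ _, by simp⟩
    · refine ⟨l ++ [(X.succ_nonempty u).choose],
        ⟨ConsH_concat X σ₁ s hcl (X.succ_nonempty u).choose_spec
          (fun hv' => absurd hv' hv),
          hel.trans (List.prefix_append _ _)⟩, List.prefix_append _ _, by simp⟩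
  set c : ℕ → {l // ConsH X σ₁ s l ∧ e <+: l} :=
    chainOf (fun l => ConsH X σ₁ s l ∧ e <+: l) (fun a b => a <+: b ∧ b.length = a.length + 1) e ⟨hce, List.prefix_refl e⟩ hstep
    with hcdef
  have hrel : ∀ k, (c k).1 <+: (c (k+1)).1 ∧ (c (k+1)).1.length = (c k).1.length + 1 :=
    fun k => chainOf_succ_rel (fun l => ConsH X σ₁ s l ∧ e <+: l)
      (fun a b => a <+: b ∧ b.length = a.length + 1) e ⟨hce, List.prefix_refl e⟩ hstep k
  have hlen : ∀ k, (c k).1.length = e.length + k := by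
    intro k
    induction k with
    | zero => rfl
    | succ m ih => rw [(hrel m).2, ih]; omega
  obtain ⟨σ₂, hσ₂⟩ := realize_chain X σ₁ s (fun k => (c k).1)
    (fun k => (c k).2.1) (fun k => (hrel k).1)
    (fun k => by show k < (c k).1.length; rw [hlen k]; omega)
  have hout : ∀ k, k < e.length → X.out σ₁ σ₂ s k = e.getD k s := by
    intro k hk
    rw [hσ₂ k]
    have : e <+: (c k).1 := (c k).2.2
    exact getD_of_prefix s this hk
  have hfin : ∃ l, X.out σ₁ σ₂ s l ∈ X.F :=
    ⟨e.length - 1, by rw [hout _ (by omega)]; exact hlaste⟩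
  have hfind : Nat.find hfin = e.length - 1 := by
    rw [Nat.find_eq_iff]
    refine ⟨by rw [hout _ (by omega)]; exact hlaste, ?_⟩
    intro m hm
    rw [hout _ (by omega)]
    exact hfe m (by omega)
  have hcost : X.cost (X.out σ₁ σ₂ s) = accH X s e := by
    unfold MWGame.cost
    rw [dif_pos hfin, hfind]
    funext j
    apply Finset.sum_congr rfl
    intro n hn
    simp only [Finset.mem_range] at hn
    rw [hout _ (by omega), hout _ (by omega)]
  have := hguar σ₂
  rwa [hcost] at this

end Stmt19Jump
section Stmt19Main

variable {W : Type*}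

/-- The actual history after `n` steps. -/
def Alist (ρ : ℕ → W) (n : ℕ) : List W := (List.range (n+1)).map ρ

/-- The virtual pointer after `n` steps. -/
noncomputable def Pptr (X : MWGame W 2) (σ₁ : X.Strat1) (s : W) (ρ : ℕ → W) (n : ℕ) :
    List W := ptrH X σ₁ s (Alist ρ n)

/-- The invariant maintained along a play against the shortened strategy. -/
abbrev GoodN (X : MWGame W 2) (σ₁ : X.Strat1) (s : W) (ρ : ℕ → W) (n : ℕ) : Prop :=
  ConsH X σ₁ s (Pptr X σ₁ s ρ n) ∧
  (∀ i, i + 1 < (Pptr X σ₁ s ρ n).length → (Pptr X σ₁ s ρ n).getD i s ∉ X.F) ∧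
  (Pptr X σ₁ s ρ n).getD ((Pptr X σ₁ s ρ n).length - 1) s = ρ n ∧
  (∀ j, accH X s (Alist ρ n) j ≤ accH X s (Pptr X σ₁ s ρ n) j) ∧
  (ρ n ∉ X.F → FinalH X σ₁ s (Pptr X σ₁ s ρ n))

lemma Alist_length (ρ : ℕ → W) (n : ℕ) : (Alist ρ n).length = n + 1 := by
  simp [Alist]

lemma Alist_getD (s : W) (ρ : ℕ → W) {n i : ℕ} (hi : i ≤ n) : (Alist ρ n).getD i s = ρ i := by
  rw [List.getD_eq_getElem _ _ (by rw [Alist_length]; omega)]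
  simp [Alist]

lemma Alist_succ (ρ : ℕ → W) (n : ℕ) : Alist ρ (n+1) = Alist ρ n ++ [ρ (n+1)] := by
  simp [Alist, List.range_succ]

lemma Alist_zero (ρ : ℕ → W) : Alist ρ 0 = [ρ 0] := by
  simp [Alist, List.range_succ]

lemma main_short (X : MWGame W 2) (σ₁ : X.Strat1) (s : W)
    (le : CostP 2 → CostP 2 → Prop) (t : CostP 2)
    (hguar : ∀ σ₂ : X.Strat2, le (X.cost (X.out σ₁ σ₂ s)) t)
    (htop : ¬ le (⊤ : CostP 2) t)
    (hcompat : ∀ a b : CostP 2, (∀ j, a j ≤ b j) → le b t → le a t) :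
    ∃ σ₁' : X.Strat1, ∀ σ₂ : X.Strat2,
      (∀ m n, m < n → (∀ k, k ≤ n → X.out σ₁' σ₂ s k ∉ X.F) →
        X.out σ₁' σ₂ s m ≠ X.out σ₁' σ₂ s n) ∧
      ((∃ l, X.out σ₁' σ₂ s l ∈ X.F) → le (X.cost (X.out σ₁' σ₂ s)) t) := by
  classical
  set f : List W → W → W := fun past u => σ₁.1 (ptrH X σ₁ s (past ++ [u])).dropLast u with hf
  have hfval : ∀ h u, u ∈ X.V1 → X.E u (f h u) := fun h u hu => σ₁.2 _ u hu
  set σ' : X.Strat1 := ⟨f, hfval⟩ with hσ'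
  refine ⟨σ', ?_⟩
  intro σ₂
  set ρ : ℕ → W := X.out σ' σ₂ s with hρ
  have hρ0 : ρ 0 = s := rfl
  have hAcat : ∀ n, (List.range n).map ρ ++ [ρ n] = Alist ρ n := by
    intro n; simp [Alist, List.range_succ]
  have hρsucc : ∀ n, ρ (n+1) = if ρ n ∈ X.V1 then σ₁.1 (Pptr X σ₁ s ρ n).dropLast (ρ n)
      else σ₂.1 ((List.range n).map ρ) (ρ n) := by
    intro n
    rw [hρ, out_succ]
    by_cases hv : ρ n ∈ X.V1
    · rw [if_pos hv, if_pos hv]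
      show f ((List.range n).map ρ) (ρ n) = _
      rw [hf]
      simp only
      rw [hAcat n]
      rfl
    · rw [if_neg hv, if_neg hv]
  -- the base of the invariant
  have hc0 : ConsH X σ₁ s [s] := by
    refine ⟨by simp, by simp, ?_⟩
    intro i hi
    simp at hi
  have hP0 : Pptr X σ₁ s ρ 0 = jumpH X σ₁ s [s] := by
    unfold Pptr
    rw [Alist_zero, hρ0, ptrH_le_one X σ₁ s (by simp)]
  have good0 : GoodN X σ₁ s ρ 0 := by
    by_cases hsF : s ∈ X.F
    · have hj : jumpH X σ₁ s [s] = [s] := jumpH_no_ext X σ₁ s hc0 (by simpa)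
      rw [GoodN, hP0, hj]
      refine ⟨hc0, by intro i hi; simp at hi, by simp [hρ0], ?_, ?_⟩
      · intro j; rw [Alist_zero, hρ0]
      · intro hn; exact absurd (by rw [hρ0]; exact hsF) hn
    · obtain ⟨hpj, hcj, hfj, hlj, hfinj⟩ :=
        jumpH_spec X σ₁ s hguar htop hc0 (by intro i hi; simp at hi) (by simpa)
      rw [GoodN, hP0]
      refine ⟨hcj, hfj, by rw [hlj]; simp [hρ0], ?_, fun _ => hfinj⟩
      intro j
      rw [Alist_zero, hρ0]
      exact accH_prefix_le X s hpj (by simp) j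
  -- the inductive step
  have stepG : ∀ n, GoodN X σ₁ s ρ n → (∀ k, k ≤ n → ρ k ∉ X.F) →
      GoodN X σ₁ s ρ (n+1) ∧ Pptr X σ₁ s ρ n <+: Pptr X σ₁ s ρ (n+1) ∧
        (Pptr X σ₁ s ρ n).length < (Pptr X σ₁ s ρ (n+1)).length := by
    intro n hG hpre
    obtain ⟨hcn, hfn, hlastn, haccn, hfinn⟩ := hG
    have h1n : 1 ≤ (Pptr X σ₁ s ρ n).length := List.length_pos_iff.mpr hcn.1
    have hnF : ρ n ∉ X.F := hpre n le_rfl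
    have hPs : Pptr X σ₁ s ρ (n+1) = jumpH X σ₁ s (Pptr X σ₁ s ρ n ++ [ρ (n+1)]) := by
      unfold Pptr
      rw [ptrH_ge_two X σ₁ s (by rw [Alist_length]; omega)]
      rw [show (Alist ρ (n+1)).dropLast = Alist ρ n by rw [Alist_succ, List.dropLast_concat]]
      rw [Alist_length, show n + 1 + 1 - 1 = n + 1 by omega, Alist_getD s ρ (le_refl (n+1))]
    have hcons' : ConsH X σ₁ s (Pptr X σ₁ s ρ n ++ [ρ (n+1)]) := by
      by_cases hv : ρ n ∈ X.V1
      · have hmove : ρ (n+1) = σ₁.1 (Pptr X σ₁ s ρ n).dropLast (ρ n) := by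
          rw [hρsucc n, if_pos hv]
        refine ConsH_concat X σ₁ s hcn ?_ ?_
        · rw [hlastn, hmove]; exact σ₁.2 _ _ hv
        · rw [hlastn]; intro _; exact hmove
      · have hmove : ρ (n+1) = σ₂.1 ((List.range n).map ρ) (ρ n) := by
          rw [hρsucc n, if_neg hv]
        refine ConsH_concat X σ₁ s hcn ?_ ?_
        · rw [hlastn, hmove]; exact σ₂.2 _ _ hv
        · rw [hlastn]; exact fun hv' => absurd hv' hv
    have hall' : ∀ i, i + 1 < (Pptr X σ₁ s ρ n ++ [ρ (n+1)]).length →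
        (Pptr X σ₁ s ρ n ++ [ρ (n+1)]).getD i s ∉ X.F := by
      intro i hi
      simp only [List.length_append, List.length_singleton] at hi
      rcases Nat.lt_or_ge (i+1) (Pptr X σ₁ s ρ n).length with hlt | hge
      · rw [List.getD_append _ _ _ _ (by omega)]; exact hfn i hlt
      · have : i = (Pptr X σ₁ s ρ n).length - 1 := by omega
        subst this
        rw [List.getD_append _ _ _ _ (by omega), hlastn]; exact hnF
    have hlast' : (Pptr X σ₁ s ρ n ++ [ρ (n+1)]).getD
        ((Pptr X σ₁ s ρ n ++ [ρ (n+1)]).length - 1) s = ρ (n+1) := by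
      simp only [List.length_append, List.length_singleton]
      rw [show (Pptr X σ₁ s ρ n).length + 1 - 1 = (Pptr X σ₁ s ρ n).length by omega,
        getD_concat_self]
    have hacc' : ∀ j, accH X s (Alist ρ (n+1)) j ≤
        accH X s (Pptr X σ₁ s ρ n ++ [ρ (n+1)]) j := by
      intro j
      rw [Alist_succ,
        accH_concat X s (by rw [← List.length_pos_iff, Alist_length]; omega) (ρ (n+1)) j,
        accH_concat X s hcn.1 (ρ (n+1)) j,
        show (Alist ρ n).getD ((Alist ρ n).length - 1) s = ρ n by
          rw [Alist_length, show n + 1 - 1 = n by omega, Alist_getD s ρ (le_refl n)],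
        hlastn]
      exact add_le_add (haccn j) le_rfl
    by_cases hF' : ρ (n+1) ∈ X.F
    · have hjeq : jumpH X σ₁ s (Pptr X σ₁ s ρ n ++ [ρ (n+1)]) = Pptr X σ₁ s ρ n ++ [ρ (n+1)] :=
        jumpH_no_ext X σ₁ s hcons' (by rw [hlast']; exact hF')
      rw [GoodN, hPs, hjeq]
      exact ⟨⟨hcons', hall', hlast', hacc', fun hn => absurd hF' hn⟩,
        List.prefix_append _ _, by simp⟩
    · obtain ⟨hpj, hcj, hfj, hlj, hfinj⟩ :=
        jumpH_spec X σ₁ s hguar htop hcons' hall' (by rw [hlast']; exact hF')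
      rw [GoodN, hPs]
      refine ⟨⟨hcj, hfj, by rw [hlj, hlast'], ?_, fun _ => hfinj⟩,
        (List.prefix_append _ _).trans hpj, ?_⟩
      · intro j
        exact (hacc' j).trans (accH_prefix_le X s hpj (by simp) j)
      · have := hpj.length_le
        simp only [List.length_append, List.length_singleton] at this
        omega
  have inv : ∀ n, (∀ k, k < n → ρ k ∉ X.F) → GoodN X σ₁ s ρ n := by
    intro n
    induction n with
    | zero => intro _; exact good0
    | succ m ih =>
      intro hpre
      exact (stepG m (ih (fun k hk => hpre k (by omega))) (fun k hk => hpre k (by omega))).1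
  have chain : ∀ m n, m < n → (∀ k, k < n → ρ k ∉ X.F) →
      Pptr X σ₁ s ρ m <+: Pptr X σ₁ s ρ n ∧
      (Pptr X σ₁ s ρ m).length < (Pptr X σ₁ s ρ n).length := by
    intro m n hmn
    induction n with
    | zero => omega
    | succ q ih =>
      intro hpre
      have hq := stepG q (inv q (fun k hk => hpre k (by omega))) (fun k hk => hpre k (by omega))
      rcases Nat.lt_or_ge m q with h | h
      · obtain ⟨hp1, hl1⟩ := ih h (fun k hk => hpre k (by omega))
        exact ⟨hp1.trans hq.2.1, lt_trans hl1 hq.2.2⟩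
      · have : m = q := by omega
        subst this
        exact ⟨hq.2.1, hq.2.2⟩
  constructor
  · -- no repetition before the target
    intro m n hmn hall heq
    have hGm := inv m (fun k hk => hall k (by omega))
    have hGn := inv n (fun k hk => hall k (by omega))
    obtain ⟨hpmn, hlmn⟩ := chain m n hmn (fun k hk => hall k (by omega))
    exact hGm.2.2.2.2 (hall m (by omega)) ⟨Pptr X σ₁ s ρ n, hGn.1, hlmn, hpmn,
      by rw [hGn.2.2.1, hGm.2.2.1]; exact heq.symm, fun i _ hi2 => hGn.2.1 i hi2⟩
  · -- the cost guarantee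
    intro hfin
    have hGL := inv (Nat.find hfin) (fun k hk => Nat.find_min hfin hk)
    have hlive := fincost X σ₁ s hguar hGL.1 hGL.2.1
      (by rw [hGL.2.2.1]; exact Nat.find_spec hfin)
    have hcosteq : ∀ j, X.cost ρ j = accH X s (Alist ρ (Nat.find hfin)) j := by
      intro j
      unfold MWGame.cost
      rw [dif_pos hfin]
      unfold accH
      rw [Alist_length, show Nat.find hfin + 1 - 1 = Nat.find hfin by omega]
      apply Finset.sum_congr rfl
      intro n hn
      simp only [Finset.mem_range] at hn
      rw [Alist_getD s ρ (by omega : n ≤ Nat.find hfin),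
        Alist_getD s ρ (by omega : n + 1 ≤ Nat.find hfin)]
    exact hcompat (X.cost ρ) (accH X s (Pptr X σ₁ s ρ (Nat.find hfin)))
      (fun j => by rw [hcosteq j]; exact hGL.2.2.2.1 j) hlive

end Stmt19Main
section Stmt19Final

lemma out_E {W : Type*} (X : MWGame W 2) (σ₁ : X.Strat1) (σ₂ : X.Strat2) (s : W) (n : ℕ) :
    X.E (X.out σ₁ σ₂ s n) (X.out σ₁ σ₂ s (n+1)) := by
  rw [out_succ]
  by_cases hv : X.out σ₁ σ₂ s n ∈ X.V1
  · rw [if_pos hv]; exact σ₁.2 _ _ hv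
  · rw [if_neg hv]; exact σ₂.2 _ _ hv

lemma ext_E_right {V : Type*} [Fintype V] (G : QRGame V) (swap : Bool) {a b : G.XV}
    (hE : (G.extGame swap).E a b) (ha : a.isRight) : b.isLeft := by
  rcases a with a | a
  · simp at ha
  · rcases b with b | b
    · simp
    · exact absurd hE (by simp [QRGame.extGame])

lemma ext_F_left {V : Type*} [Fintype V] (G : QRGame V) (swap : Bool) {a : G.XV}
    (ha : a ∈ (G.extGame swap).F) : a.isLeft := by
  obtain ⟨u, _, rfl⟩ : ∃ u ∈ G.F, a = Sum.inl u := ha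
  simp

end Stmt19Final

/-- In the extended game (`X_CP` or `X_PC`) of a quantitative
reachability game with penalties, if Player 1 has a strategy from `v^X` ensuring
`(x,y)` (w.r.t. `≤_C` or `≤_L`), then he has one that moreover guarantees that the
target set of the extended game is reached within `2·|V|` steps. -/
theorem stmt19 {V : Type*} [Fintype V] (G : QRGame V) (swap : Bool)
    (le : CostP 2 → CostP 2 → Prop) (hle : le = leC ∨ le = leL)
    (v : V) (x y : ℕ)
    (hex : ∃ σ₁ : (G.extGame swap).Strat1, ∀ σ₂ : (G.extGame swap).Strat2,
      le ((G.extGame swap).cost ((G.extGame swap).out σ₁ σ₂ (Sum.inl v)))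
        (pair2 x y)) :
    ∃ σ₁' : (G.extGame swap).Strat1, ∀ σ₂ : (G.extGame swap).Strat2,
      le ((G.extGame swap).cost ((G.extGame swap).out σ₁' σ₂ (Sum.inl v)))
        (pair2 x y) ∧
      ∃ h : (∃ l, (G.extGame swap).out σ₁' σ₂ (Sum.inl v) l ∈ (G.extGame swap).F),
        Nat.find h ≤ 2 * Fintype.card V := by
  classical
  obtain ⟨σ₁, hσ₁⟩ := hex
  obtain ⟨σ₁', hσ₁'⟩ := main_short (G.extGame swap) σ₁ (Sum.inl v) le (pair2 x y) hσ₁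
    (not_le_top hle x y) (fun a b hab hbt => le_compat hle hab hbt)
  refine ⟨σ₁', ?_⟩
  intro σ₂
  obtain ⟨hdist, hcost⟩ := hσ₁' σ₂
  set ρ : ℕ → G.XV := (G.extGame swap).out σ₁' σ₂ (Sum.inl v) with hρ
  set N := Fintype.card V with hN
  -- the target set is reached within 2N steps
  have hhit : ∃ l, l ≤ 2 * N ∧ ρ l ∈ (G.extGame swap).F := by
    by_contra hno
    push_neg at hno
    have hnd : ∀ m n, m < n → n ≤ 2 * N → ρ m ≠ ρ n := by
      intro m n hmn hn
      exact hdist m n hmn (fun k hk => hno k (by omega))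
    have hleft0 : (ρ 0).isLeft := by rw [hρ]; rfl
    set T := (Finset.range (2*N+1)).filter (fun k => (ρ k).isLeft) with hT
    set R := (Finset.range (2*N+1)).filter (fun k => ¬ (ρ k).isLeft) with hR
    have hTR : T.card + R.card = 2*N+1 := by
      rw [hT, hR, Finset.card_filter_add_card_filter_not, Finset.card_range]
    have hRT : R.card ≤ T.card := by
      apply Finset.card_le_card_of_injOn (fun k => k - 1)
      · intro k hk
        simp only [Finset.mem_coe] at hk ⊢
        rw [hR, Finset.mem_filter, Finset.mem_range] at hk
        obtain ⟨hk1, hk2⟩ := hk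
        have hk0 : k ≠ 0 := by
          intro h; rw [h] at hk2; exact hk2 hleft0
        rw [hT, Finset.mem_filter, Finset.mem_range]
        refine ⟨by omega, ?_⟩
        by_contra hL
        have hRk : (ρ (k-1)).isRight := Sum.not_isLeft.mp hL
        have hEk : (G.extGame swap).E (ρ (k-1)) (ρ (k-1+1)) := out_E (G.extGame swap) σ₁' σ₂ (Sum.inl v) (k-1)
        rw [show k - 1 + 1 = k by omega] at hEk
        exact hk2 (ext_E_right G swap hEk hRk)
      · intro k hk k' hk' hkk'
        simp only [hR, Finset.coe_filter, Set.mem_setOf_eq, Finset.mem_range] at hk hk'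
        have h0 : k ≠ 0 := fun h => hk.2 (h ▸ hleft0)
        have h0' : k' ≠ 0 := fun h => hk'.2 (h ▸ hleft0)
        simp only at hkk'
        omega
    have hTV : T.card ≤ N := by
      rw [hN, ← Finset.card_univ]
      apply Finset.card_le_card_of_injOn (fun k => ((ρ k).getLeft?).getD v)
      · intro k _; exact Finset.mem_univ _
      · intro k hk k' hk' hkk'
        simp only [hT, Finset.coe_filter, Set.mem_setOf_eq, Finset.mem_range] at hk hk'
        obtain ⟨a, ha⟩ := Sum.isLeft_iff.mp hk.2
        obtain ⟨a', ha'⟩ := Sum.isLeft_iff.mp hk'.2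
        simp only [ha, ha', Sum.getLeft?, Option.getD_some] at hkk'
        have : ρ k = ρ k' := by rw [ha, ha', hkk']
        by_contra hne
        rcases Nat.lt_or_ge k k' with h | h
        · exact hnd k k' h (by omega) this
        · exact hnd k' k (by omega) (by omega) this.symm
    omega
  obtain ⟨l, hl1, hl2⟩ := hhit
  have hfin : ∃ l', ρ l' ∈ (G.extGame swap).F := ⟨l, hl2⟩
  exact ⟨hcost hfin, hfin, le_trans (Nat.find_min' hfin hl2) hl1⟩
end
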